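/- arXiv:2507.07051 — 2 statements merged into one kernel-verified Lean document; each statement's English description precedes it below -/
import Mathlib

section
/- Let m ≥ 1 and n ≥ 1 be natural numbers and set h = 2^{n−1}·m and N = 2^{n−1}. Define g : ℝ → ℝ by g(x) = (∏_{i=1}^{h} (1 − x^{2^i−1})) / (∏_{i=1}^{m} (1 − x^{2^i−1}))^{N}. Then g(x) tends, as x tends to 1 within ℝ \ {1}, to the real number ∏_{j=0}^{N−1} ∏_{i=1}^{m} (2^{jm+i} − 1)/(2^i − 1). -/
open Filter Finset

private lemma prod_range_mul_aux (f : ℕ → ℝ) (N m : ℕ) :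
    ∏ k ∈ range (N * m), f k = ∏ j ∈ range N, ∏ i ∈ range m, f (j * m + i) := by
  induction N with
  | zero => simp
  | succ N ih =>
      rw [Nat.succ_mul, Finset.prod_range_add, ih, Finset.prod_range_succ]

/-- The l'Hôpital-style limit in the proof of Corollary 3.8: for `m, n ≥ 1`,
`h = 2^{n-1}·m`, `N = 2^{n-1}`, the function
`g(x) = (∏_{i=1}^h (1 - x^{2^i-1})) / (∏_{i=1}^m (1 - x^{2^i-1}))^N`
tends, as `x → 1` with `x ≠ 1`, to `∏_{j=0}^{N-1} ∏_{i=1}^m (2^{jm+i}-1)/(2^i-1)`. -/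
theorem tendsto_poincare_ratio (n m : ℕ) (hn : 1 ≤ n) (hm : 1 ≤ m) :
    Tendsto
      (fun x : ℝ =>
        (∏ i ∈ Finset.range (2 ^ (n - 1) * m), (1 - x ^ (2 ^ (i + 1) - 1))) /
          (∏ i ∈ Finset.range m, (1 - x ^ (2 ^ (i + 1) - 1))) ^ (2 ^ (n - 1)))
      (nhdsWithin (1 : ℝ) {(1 : ℝ)}ᶜ)
      (nhds (∏ j ∈ Finset.range (2 ^ (n - 1)), ∏ i ∈ Finset.range m,
        (((2 : ℝ) ^ (j * m + i + 1) - 1) / ((2 : ℝ) ^ (i + 1) - 1)))) := by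
  set N := 2 ^ (n - 1) with hN
  set S : ℕ → ℝ → ℝ := fun a x => ∑ t ∈ range a, x ^ t with hS
  set F : ℝ → ℝ := fun x => ∏ j ∈ range N, ∏ i ∈ range m,
      S (2 ^ (j * m + i + 1) - 1) x / S (2 ^ (i + 1) - 1) x with hF
  have S1 : ∀ a : ℕ, S a 1 = (a : ℝ) := by
    intro a; simp [hS]
  have contS : ∀ a : ℕ, Continuous (S a) :=
    fun a => continuous_finset_sum _ fun t _ => continuous_pow t
  have hpow1 : ∀ k : ℕ, (1 : ℕ) ≤ 2 ^ k := fun k => Nat.one_le_two_pow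
  -- value of F at 1
  have hF1 : F 1 = ∏ j ∈ range N, ∏ i ∈ range m,
      (((2 : ℝ) ^ (j * m + i + 1) - 1) / ((2 : ℝ) ^ (i + 1) - 1)) := by
    rw [hF]
    refine Finset.prod_congr rfl fun j _ => Finset.prod_congr rfl fun i _ => ?_
    rw [S1, S1]
    push_cast [Nat.cast_sub (hpow1 _)]
    norm_num
  have hSne : ∀ i : ℕ, S (2 ^ (i + 1) - 1) 1 ≠ 0 := by
    intro i
    rw [S1]
    have : (1 : ℕ) ≤ 2 ^ (i + 1) - 1 := by
      have := hpow1 (i + 1)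
      omega
    positivity
  have hFt0 : Tendsto F (nhds 1) (nhds (F 1)) := by
    simp only [hF]
    refine tendsto_finset_prod _ fun j _ => tendsto_finset_prod _ fun i _ => ?_
    exact Tendsto.div ((contS _).tendsto 1) ((contS _).tendsto 1) (hSne i)
  have hFt : Tendsto F (nhdsWithin (1 : ℝ) {(1 : ℝ)}ᶜ)
      (nhds (∏ j ∈ range N, ∏ i ∈ range m,
        (((2 : ℝ) ^ (j * m + i + 1) - 1) / ((2 : ℝ) ^ (i + 1) - 1)))) := by
    rw [← hF1]
    exact hFt0.mono_left nhdsWithin_le_nhds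
  refine Tendsto.congr' ?_ hFt
  filter_upwards [eventually_mem_nhdsWithin] with x hx
  have hx1 : x ≠ 1 := hx
  have hx' : (1 : ℝ) - x ≠ 0 := sub_ne_zero.mpr (Ne.symm hx1)
  have h1 : ∀ a : ℕ, 1 - x ^ a = (1 - x) * S a x := by
    intro a
    rw [hS]
    simp only
    rw [geom_sum_eq hx1]
    have hx'' : x - 1 ≠ 0 := sub_ne_zero.mpr hx1
    field_simp
    ring
  have hnum : (∏ i ∈ range (N * m), (1 - x ^ (2 ^ (i + 1) - 1)))
      = (1 - x) ^ (N * m) * ∏ i ∈ range (N * m), S (2 ^ (i + 1) - 1) x := by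
    simp_rw [h1]
    rw [Finset.prod_mul_distrib, Finset.prod_const, Finset.card_range]
  have hden : (∏ i ∈ range m, (1 - x ^ (2 ^ (i + 1) - 1))) ^ N
      = (1 - x) ^ (N * m) * (∏ i ∈ range m, S (2 ^ (i + 1) - 1) x) ^ N := by
    simp_rw [h1]
    rw [Finset.prod_mul_distrib, Finset.prod_const, Finset.card_range, mul_pow,
      ← pow_mul, mul_comm m N]
  have hB : (∏ i ∈ range m, S (2 ^ (i + 1) - 1) x) ^ N
      = ∏ _j ∈ range N, ∏ i ∈ range m, S (2 ^ (i + 1) - 1) x := by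
    rw [Finset.prod_const, Finset.card_range]
  rw [hF]
  simp only
  rw [hnum, hden, mul_div_mul_left _ _ (pow_ne_zero _ hx'),
    prod_range_mul_aux (fun k => S (2 ^ (k + 1) - 1) x) N m, hB,
    ← Finset.prod_div_distrib]
  exact Finset.prod_congr rfl fun j _ => Finset.prod_div_distrib _ _
end

section
/- Let A be a commutative ring, let h ≥ 0, and let a_1, …, a_h ∈ A be such that (2, a_1, …, a_h) is a regular sequence on A and the quotient ring A/(2, a_1, …, a_h) is finite. Then for all positive integers i_0, i_1, …, i_h, the quotient ring A/(2^{i_0}, a_1^{i_1}, …, a_h^{i_h}) is finite of cardinality |A/(2, a_1, …, a_h)|^{i_0 · i_1 ⋯ i_h}. -/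
open Function Submodule RingTheory.Sequence
open scoped Pointwise

universe u v

private lemma mem_psmul_top_iff' {A : Type u} [CommRing A] {M : Type v} [AddCommGroup M]
    [Module A M] {r : A} {m : M} : m ∈ r • (⊤ : Submodule A M) ↔ ∃ n, r • n = m := by
  constructor
  · intro hm
    rw [← SetLike.mem_coe, Submodule.coe_pointwise_smul] at hm
    obtain ⟨n, -, hn⟩ := hm
    exact ⟨n, hn⟩
  · rintro ⟨n, rfl⟩
    exact Submodule.smul_mem_pointwise_smul n r ⊤ trivial

lemma ses_card {A : Type u} [CommRing A] {M₁ M₂ M₃ : Type v}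
    [AddCommGroup M₁] [AddCommGroup M₂] [AddCommGroup M₃]
    [Module A M₁] [Module A M₂] [Module A M₃]
    (f : M₁ →ₗ[A] M₂) (g : M₂ →ₗ[A] M₃)
    (hf : Function.Injective f) (hg : Function.Surjective g) (he : Function.Exact f g) :
    Nat.card M₂ = Nat.card M₁ * Nat.card M₃ ∧ (Finite M₁ → Finite M₃ → Finite M₂) := by
  have e3 : (M₂ ⧸ g.toAddMonoidHom.ker) ≃ M₃ :=
    (QuotientAddGroup.quotientKerEquivOfSurjective g.toAddMonoidHom hg).toEquiv
  have e1 : M₁ ≃ g.toAddMonoidHom.ker := by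
    refine Equiv.ofBijective (fun m => ⟨f m, ?_⟩) ⟨fun a b hab => hf (by simpa using hab), ?_⟩
    · simp [AddMonoidHom.mem_ker, he.apply_apply_eq_zero]
    · rintro ⟨y, hy⟩
      obtain ⟨x, hx⟩ := (he y).mp hy
      exact ⟨x, by simp [hx]⟩
  constructor
  · rw [AddSubgroup.card_eq_card_quotient_mul_card_addSubgroup g.toAddMonoidHom.ker,
      Nat.card_congr e3, Nat.card_congr e1.symm, mul_comm]
  · intro h1 h3
    have := Finite.of_equiv _ e1
    have := Finite.of_equiv _ e3.symm
    exact Finite.of_equiv _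
      (AddSubgroup.addGroupEquivQuotientProdAddSubgroup (s := g.toAddMonoidHom.ker)).symm

lemma ses_regular_card {A : Type u} [CommRing A] :
    ∀ (l : List A) {M₁ M₂ M₃ : Type v}
      [AddCommGroup M₁] [AddCommGroup M₂] [AddCommGroup M₃]
      [Module A M₁] [Module A M₂] [Module A M₃]
      (f : M₁ →ₗ[A] M₂) (g : M₂ →ₗ[A] M₃),
      Function.Injective f → Function.Surjective g → Function.Exact f g →
      IsWeaklyRegular M₁ l → IsWeaklyRegular M₃ l →
      IsWeaklyRegular M₂ l ∧
      Nat.card (M₂ ⧸ (Ideal.ofList l • ⊤ : Submodule A M₂)) =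
        Nat.card (M₁ ⧸ (Ideal.ofList l • ⊤ : Submodule A M₁)) *
          Nat.card (M₃ ⧸ (Ideal.ofList l • ⊤ : Submodule A M₃)) ∧
      (Finite (M₁ ⧸ (Ideal.ofList l • ⊤ : Submodule A M₁)) →
        Finite (M₃ ⧸ (Ideal.ofList l • ⊤ : Submodule A M₃)) →
        Finite (M₂ ⧸ (Ideal.ofList l • ⊤ : Submodule A M₂))) := by
  intro l
  induction l with
  | nil =>
    intro M₁ M₂ M₃ _ _ _ _ _ _ f g hf hg he h₁ h₃
    have e : ∀ (M : Type v) [AddCommGroup M] [Module A M],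
        (M ⧸ (Ideal.ofList ([] : List A) • ⊤ : Submodule A M)) ≃ₗ[A] M := by
      intro M _ _
      exact Submodule.quotEquivOfEqBot _ (by rw [Ideal.ofList_nil, bot_smul])
    obtain ⟨hcard, hfin⟩ := ses_card f g hf hg he
    refine ⟨IsWeaklyRegular.nil A M₂, ?_, ?_⟩
    · rw [Nat.card_congr (e M₁).toEquiv, Nat.card_congr (e M₂).toEquiv,
        Nat.card_congr (e M₃).toEquiv]
      exact hcard
    · intro i1 i3
      have f1 := Finite.of_equiv _ (e M₁).toEquiv
      have f3 := Finite.of_equiv _ (e M₃).toEquiv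
      have f2 := hfin f1 f3
      exact Finite.of_equiv _ (e M₂).toEquiv.symm
  | cons r rs ih =>
    intro M₁ M₂ M₃ _ _ _ _ _ _ f g hf hg he h₁ h₃
    obtain ⟨hr₁, h₁'⟩ := (isWeaklyRegular_cons_iff M₁ r rs).mp h₁
    obtain ⟨hr₃, h₃'⟩ := (isWeaklyRegular_cons_iff M₃ r rs).mp h₃
    have hr₂ : IsSMulRegular M₂ r := by
      intro a b hab
      have hab' : r • a = r • b := hab
      have h0 : r • (a - b) = 0 := by rw [smul_sub, sub_eq_zero]; exact hab'
      have hg0 : g (a - b) = 0 := by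
        have : r • g (a - b) = r • (0 : M₃) := by rw [← map_smul, h0, map_zero, smul_zero]
        exact hr₃ this
      obtain ⟨m, hm⟩ := (he _).mp hg0
      have hm0 : m = 0 := by
        have : r • f m = (0 : M₂) := by rw [← hm] at h0; exact h0
        have : f (r • m) = f 0 := by rw [map_smul, map_zero]; exact this
        have : r • m = (0 : M₁) := hf this
        have : r • m = r • (0 : M₁) := by rw [this, smul_zero]
        exact hr₁ this
      rw [hm0, map_zero] at hm
      exact sub_eq_zero.mp hm.symm
    have hg' : Function.Surjective (QuotSMulTop.map r g) := QuotSMulTop.map_surjective r hg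
    have he' : Function.Exact (QuotSMulTop.map r f) (QuotSMulTop.map r g) :=
      QuotSMulTop.map_exact r he hg
    have hf' : Function.Injective (QuotSMulTop.map r f) := by
      rw [← LinearMap.ker_eq_bot, eq_bot_iff]
      rintro x hx
      obtain ⟨m, rfl⟩ := Submodule.Quotient.mk_surjective _ x
      rw [LinearMap.mem_ker, QuotSMulTop.map_apply_mk, Submodule.Quotient.mk_eq_zero] at hx
      obtain ⟨n, hn⟩ := mem_psmul_top_iff'.mp hx
      have hgn : g n = 0 := by
        have : r • g n = r • (0 : M₃) := by
          rw [← map_smul, hn, smul_zero, ← he.apply_apply_eq_zero m]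
        exact hr₃ this
      obtain ⟨p, hp⟩ := (he n).mp hgn
      have : f m = f (r • p) := by rw [map_smul, hp, hn]
      have hm : m = r • p := hf this
      rw [Submodule.mem_bot, Submodule.Quotient.mk_eq_zero]
      exact mem_psmul_top_iff'.mpr ⟨p, hm.symm⟩
    obtain ⟨hreg', hcard', hfin'⟩ := ih (QuotSMulTop.map r f) (QuotSMulTop.map r g) hf' hg' he' h₁' h₃'
    have E : ∀ (M : Type v) [AddCommGroup M] [Module A M],
        (M ⧸ (Ideal.ofList (r :: rs) • ⊤ : Submodule A M)) ≃
          (QuotSMulTop r M ⧸ (Ideal.ofList rs • ⊤ : Submodule A (QuotSMulTop r M))) := by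
      intro M _ _
      exact (Submodule.quotOfListConsSMulTopEquivQuotSMulTopInner M r rs).toEquiv
    refine ⟨IsWeaklyRegular.cons hr₂ hreg', ?_, ?_⟩
    · rw [Nat.card_congr (E M₁), Nat.card_congr (E M₂), Nat.card_congr (E M₃)]
      exact hcard'
    · intro i1 i3
      have f1 := Finite.of_equiv _ (E M₁)
      have f3 := Finite.of_equiv _ (E M₃)
      have f2 := hfin' f1 f3
      exact Finite.of_equiv _ (E M₂).symm
lemma pow_ses {A : Type u} [CommRing A] {x : A} (hx : IsSMulRegular A x) (k : ℕ) :
    ∃ (f : (A ⧸ (x ^ k • ⊤ : Submodule A A)) →ₗ[A] A ⧸ (x ^ (k+1) • ⊤ : Submodule A A))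
      (g : (A ⧸ (x ^ (k+1) • ⊤ : Submodule A A)) →ₗ[A] A ⧸ (x • ⊤ : Submodule A A)),
      Function.Injective f ∧ Function.Surjective g ∧ Function.Exact f g := by
  have hle : ∀ t : A, t ∈ (x ^ k • ⊤ : Submodule A A) →
      t ∈ Submodule.comap (LinearMap.lsmul A A x) (x ^ (k+1) • ⊤ : Submodule A A) := by
    intro t ht
    obtain ⟨s, rfl⟩ := mem_psmul_top_iff'.mp ht
    refine Submodule.mem_comap.mpr (mem_psmul_top_iff'.mpr ⟨s, ?_⟩)
    show x ^ (k+1) • s = x • x ^ k • s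
    rw [smul_smul, ← pow_succ']
  have hle2 : ∀ t : A, t ∈ (x ^ (k+1) • ⊤ : Submodule A A) →
      t ∈ Submodule.comap (LinearMap.id (R := A) (M := A)) (x • ⊤ : Submodule A A) := by
    intro t ht
    obtain ⟨s, rfl⟩ := mem_psmul_top_iff'.mp ht
    refine Submodule.mem_comap.mpr (mem_psmul_top_iff'.mpr ⟨x ^ k • s, ?_⟩)
    show x • x ^ k • s = x ^ (k+1) • s
    rw [smul_smul, ← pow_succ']
  refine ⟨Submodule.mapQ _ _ (LinearMap.lsmul A A x) hle,
    Submodule.mapQ _ _ LinearMap.id hle2, ?_, ?_, ?_⟩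
  · rw [← LinearMap.ker_eq_bot, eq_bot_iff]
    rintro y hy
    obtain ⟨t, rfl⟩ := Submodule.Quotient.mk_surjective _ y
    rw [LinearMap.mem_ker, Submodule.mapQ_apply, Submodule.Quotient.mk_eq_zero] at hy
    obtain ⟨s, hs⟩ := mem_psmul_top_iff'.mp hy
    have hs' : x ^ (k+1) • s = x • t := by rw [LinearMap.lsmul_apply] at hs; exact hs
    have hxts : x • (x ^ k • s) = x • t := by rw [smul_smul, ← pow_succ']; exact hs'
    have ht : x ^ k • s = t := hx hxts
    rw [Submodule.mem_bot, Submodule.Quotient.mk_eq_zero]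
    exact mem_psmul_top_iff'.mpr ⟨s, ht⟩
  · intro y
    obtain ⟨t, rfl⟩ := Submodule.Quotient.mk_surjective _ y
    exact ⟨Submodule.Quotient.mk t, rfl⟩
  · intro y
    obtain ⟨t, rfl⟩ := Submodule.Quotient.mk_surjective _ y
    rw [Submodule.mapQ_apply, LinearMap.id_apply, Submodule.Quotient.mk_eq_zero]
    constructor
    · intro ht
      obtain ⟨s, hs⟩ := mem_psmul_top_iff'.mp ht
      refine ⟨Submodule.Quotient.mk s, ?_⟩
      rw [Submodule.mapQ_apply]
      exact congrArg _ hs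
    · rintro ⟨z, hz⟩
      obtain ⟨s, rfl⟩ := Submodule.Quotient.mk_surjective _ z
      rw [Submodule.mapQ_apply] at hz
      have h1 : (LinearMap.lsmul A A x) s - t ∈ (x ^ (k+1) • ⊤ : Submodule A A) :=
        (Submodule.Quotient.eq _).mp hz
      have h2 : (LinearMap.lsmul A A x) s - t ∈ (x • ⊤ : Submodule A A) :=
        Submodule.mem_comap.mp (hle2 _ h1)
      have h3 : (LinearMap.lsmul A A x) s ∈ (x • ⊤ : Submodule A A) :=
        mem_psmul_top_iff'.mpr ⟨s, rfl⟩
      have h4 := Submodule.sub_mem _ h3 h2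
      simpa using h4
lemma zip_map_pow {α β : Type*} [CommRing α] [CommRing β] (f : α →+* β) :
    ∀ (l : List α) (e : List ℕ),
      List.zipWith (· ^ ·) (l.map f) e = (List.zipWith (· ^ ·) l e).map f := by
  intro l
  induction l with
  | nil => intro e; simp
  | cons a l ih =>
    intro e
    cases e with
    | nil => simp
    | cons n e => simp [ih, map_pow]

lemma main_aux : ∀ (n : ℕ) (A : Type u) [CommRing A] (l : List A) (e : List ℕ),
    l.length = n → e.length = n → (∀ m ∈ e, 0 < m) →
    IsWeaklyRegular A l → Finite (A ⧸ Ideal.ofList l) →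
    Finite (A ⧸ Ideal.ofList (List.zipWith (· ^ ·) l e)) ∧
    Nat.card (A ⧸ Ideal.ofList (List.zipWith (· ^ ·) l e)) =
      Nat.card (A ⧸ Ideal.ofList l) ^ e.prod := by
  intro n
  induction n with
  | zero =>
    intro A _ l e hl he _ _ hfin
    rw [List.length_eq_zero_iff] at hl he
    subst hl; subst he
    exact ⟨hfin, by simp⟩
  | succ n ihn =>
    intro A _ l e hl he hpos hreg hfin
    obtain ⟨x, ls, rfl⟩ := List.exists_cons_of_ne_nil (l := l) (by rintro rfl; simp at hl)
    obtain ⟨n₁, es, rfl⟩ := List.exists_cons_of_ne_nil (l := e) (by rintro rfl; simp at he)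
    simp only [List.length_cons, Nat.succ.injEq] at hl he
    have hn₁ : 0 < n₁ := hpos n₁ List.mem_cons_self
    obtain ⟨hx, hls1⟩ := (isWeaklyRegular_cons_iff A x ls).mp hreg
    -- the comparison equivalences
    have E : ∀ y : A, (A ⧸ Ideal.ofList (y :: ls)) ≃
        ((A ⧸ (y • ⊤ : Submodule A A)) ⧸ (Ideal.ofList ls • ⊤ :
          Submodule A (A ⧸ (y • ⊤ : Submodule A A)))) := by
      intro y
      exact ((Submodule.quotEquivOfEq (Ideal.ofList (y :: ls) : Submodule A A)
          (Ideal.ofList (y :: ls) • ⊤ : Submodule A A)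
          (by rw [smul_eq_mul, Ideal.mul_top])).trans
        (Submodule.quotOfListConsSMulTopEquivQuotSMulTopInner A y ls)).toEquiv
    -- key induction on the exponent of x
    have key : ∀ m : ℕ,
        IsWeaklyRegular (A ⧸ (x ^ (m+1) • ⊤ : Submodule A A)) ls ∧
        Nat.card (A ⧸ Ideal.ofList (x ^ (m+1) :: ls)) =
          Nat.card (A ⧸ Ideal.ofList (x :: ls)) ^ (m+1) ∧
        Finite (A ⧸ Ideal.ofList (x ^ (m+1) :: ls)) := by
      intro m
      induction m with
      | zero =>
        have epow1 : (A ⧸ (x ^ 1 • ⊤ : Submodule A A)) ≃ₗ[A] QuotSMulTop x A :=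
          Submodule.quotEquivOfEq _ _ (by rw [pow_one])
        refine ⟨(epow1.isWeaklyRegular_congr ls).mpr hls1, ?_, ?_⟩
        · rw [pow_one x, pow_one]
        · rw [pow_one x]; exact hfin
      | succ m ihm =>
        obtain ⟨hregm, hcardm, hfinm⟩ := ihm
        obtain ⟨f, g, hf, hg, he'⟩ := pow_ses hx (m+1)
        have hls1' : IsWeaklyRegular (A ⧸ (x • ⊤ : Submodule A A)) ls := hls1
        obtain ⟨hreg2, hcard2, hfin2⟩ := ses_regular_card ls f g hf hg he' hregm hls1'
        refine ⟨hreg2, ?_, ?_⟩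
        · rw [Nat.card_congr (E (x ^ (m+1+1))), hcard2, ← Nat.card_congr (E (x ^ (m+1))),
            ← Nat.card_congr (E x), hcardm]
          ring
        · have f1 : Finite ((A ⧸ (x ^ (m+1) • ⊤ : Submodule A A)) ⧸
              (Ideal.ofList ls • ⊤ : Submodule A (A ⧸ (x ^ (m+1) • ⊤ : Submodule A A)))) := by
            have := hfinm; exact Finite.of_equiv _ (E (x ^ (m+1)))
          have f3 : Finite ((A ⧸ (x • ⊤ : Submodule A A)) ⧸
              (Ideal.ofList ls • ⊤ : Submodule A (A ⧸ (x • ⊤ : Submodule A A)))) := by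
            have := hfin; exact Finite.of_equiv _ (E x)
          have f2 := hfin2 f1 f3
          exact Finite.of_equiv _ (E (x ^ (m+1+1))).symm
    obtain ⟨m, rfl⟩ : ∃ m, n₁ = m + 1 := ⟨n₁ - 1, by omega⟩
    obtain ⟨keyreg, keycard, keyfin⟩ := key m
    set I : Ideal A := Ideal.span {x ^ (m+1)} with hI
    have hIeq : I = (x ^ (m+1) • (⊤ : Submodule A A) : Submodule A A) := by
      rw [hI, ← Submodule.ideal_span_singleton_smul, smul_eq_mul, Ideal.mul_top]
    have eB : (A ⧸ I) ≃ₗ[A] (A ⧸ (x ^ (m+1) • ⊤ : Submodule A A)) :=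
      Submodule.quotEquivOfEq _ _ hIeq
    have regB' : IsWeaklyRegular (A ⧸ I) ls := (eB.isWeaklyRegular_congr ls).mpr keyreg
    have regB : IsWeaklyRegular (A ⧸ I) (ls.map (Ideal.Quotient.mk I)) := by
      rw [← Ideal.Quotient.algebraMap_eq]
      exact (isWeaklyRegular_map_algebraMap_iff (S := A ⧸ I) (M := A ⧸ I) ls).mpr regB'
    have eQQ : ((A ⧸ I) ⧸ Ideal.ofList (ls.map (Ideal.Quotient.mk I))) ≃+*
        (A ⧸ Ideal.ofList (x ^ (m+1) :: ls)) := by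
      refine (Ideal.quotEquivOfEq ?_).trans
        ((DoubleQuot.quotQuotEquivQuotSup I (Ideal.ofList ls)).trans
          (Ideal.quotEquivOfEq ?_))
      · rw [Ideal.map_ofList]
      · rw [Ideal.ofList_cons]
    have hfinB : Finite ((A ⧸ I) ⧸ Ideal.ofList (ls.map (Ideal.Quotient.mk I))) :=
      Finite.of_equiv _ eQQ.symm.toEquiv
    have cardB : Nat.card ((A ⧸ I) ⧸ Ideal.ofList (ls.map (Ideal.Quotient.mk I))) =
        Nat.card (A ⧸ Ideal.ofList (x :: ls)) ^ (m+1) := by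
      rw [Nat.card_congr eQQ.toEquiv]; exact keycard
    obtain ⟨finPow, cardPow⟩ := ihn (A ⧸ I) (ls.map (Ideal.Quotient.mk I)) es
      (by rw [List.length_map]; exact hl) he
      (fun q hq => hpos q (List.mem_cons_of_mem _ hq)) regB hfinB
    rw [zip_map_pow (Ideal.Quotient.mk I) ls es] at finPow cardPow
    have eQQ2 : ((A ⧸ I) ⧸ Ideal.ofList ((List.zipWith (· ^ ·) ls es).map
        (Ideal.Quotient.mk I))) ≃+*
        (A ⧸ Ideal.ofList (x ^ (m+1) :: List.zipWith (· ^ ·) ls es)) := by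
      refine (Ideal.quotEquivOfEq ?_).trans
        ((DoubleQuot.quotQuotEquivQuotSup I (Ideal.ofList (List.zipWith (· ^ ·) ls es))).trans
          (Ideal.quotEquivOfEq ?_))
      · rw [Ideal.map_ofList]
      · rw [Ideal.ofList_cons]
    have hzip : List.zipWith (· ^ ·) (x :: ls) ((m+1) :: es) =
        x ^ (m+1) :: List.zipWith (· ^ ·) ls es := rfl
    rw [hzip]
    constructor
    · exact Finite.of_equiv _ eQQ2.toEquiv
    · rw [← Nat.card_congr eQQ2.toEquiv, cardPow, cardB, List.prod_cons, ← pow_mul]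

/-- The algebraic core of Proposition 6.11: if `(2, a_1, …, a_h)` is a regular sequence
on a commutative ring `A` with `A/(2, a_1, …, a_h)` finite, then for all positive
integers `i_0, …, i_h`, the quotient `A/(2^{i_0}, a_1^{i_1}, …, a_h^{i_h})` is finite
of cardinality `|A/(2, a_1, …, a_h)|^{i_0 · i_1 ⋯ i_h}`. -/
theorem card_quotient_pow_regular_sequence
    (A : Type*) [CommRing A] (h : ℕ) (a : Fin h → A)
    (hreg : RingTheory.Sequence.IsWeaklyRegular A ((2 : A) :: List.ofFn a))
    (hfin : Finite (A ⧸ Ideal.span (insert (2 : A) (Set.range a))))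
    (i₀ : ℕ) (i : Fin h → ℕ) (hi₀ : 0 < i₀) (hi : ∀ k, 0 < i k) :
    Finite (A ⧸ Ideal.span (insert ((2 : A) ^ i₀) (Set.range fun k => a k ^ i k))) ∧
    Nat.card (A ⧸ Ideal.span (insert ((2 : A) ^ i₀) (Set.range fun k => a k ^ i k))) =
      Nat.card (A ⧸ Ideal.span (insert (2 : A) (Set.range a))) ^ (i₀ * ∏ k, i k) := by
  have e1 : Ideal.ofList ((2 : A) :: List.ofFn a) = Ideal.span (insert (2 : A) (Set.range a)) := by
    apply congrArg Ideal.span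
    ext r
    simp [List.mem_ofFn]
  have e2 : List.zipWith (· ^ ·) ((2 : A) :: List.ofFn a) (i₀ :: List.ofFn i) =
      (2 : A) ^ i₀ :: List.ofFn (fun k => a k ^ i k) := by
    show (2 : A) ^ i₀ :: List.zipWith (· ^ ·) (List.ofFn a) (List.ofFn i) = _
    congr 1
    apply List.ext_getElem (by simp)
    intro j h1 h2
    simp
  have e3 : Ideal.ofList ((2 : A) ^ i₀ :: List.ofFn (fun k => a k ^ i k)) =
      Ideal.span (insert ((2 : A) ^ i₀) (Set.range fun k => a k ^ i k)) := by
    apply congrArg Ideal.span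
    ext r
    simp [List.mem_ofFn]
  have hfin' : Finite (A ⧸ Ideal.ofList ((2 : A) :: List.ofFn a)) := by
    rw [e1]; exact hfin
  obtain ⟨F, C⟩ := main_aux (h + 1) A ((2 : A) :: List.ofFn a) (i₀ :: List.ofFn i)
    (by simp) (by simp)
    (by
      intro m hm
      rcases List.mem_cons.mp hm with rfl | hm
      · exact hi₀
      · obtain ⟨k, rfl⟩ := List.mem_ofFn.mp hm
        exact hi k)
    hreg hfin'
  rw [e2, e3] at F C
  rw [e1] at C
  refine ⟨F, ?_⟩
  rw [C, List.prod_cons, List.prod_ofFn]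
end
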